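/- For positive semidefinite matrices, the map (x,y) ↦ x # y (geometric mean) is jointly concave: (λx₁ + (1−λ)x₂) # (λy₁ + (1−λ)y₂) ≥ λ(x₁ # y₁) + (1−λ)(x₂ # y₂) for λ ∈ [0,1]. -/

import Mathlib

open Matrix
open scoped ComplexOrder Classical

/-- The positive semidefinite square root (junk value `0` if not PSD). -/
noncomputable def msqrt {n : ℕ} (A : Matrix (Fin n) (Fin n) ℂ) :
    Matrix (Fin n) (Fin n) ℂ :=
  if h : A.PosSemidef then
    (h.1.eigenvectorUnitary : Matrix (Fin n) (Fin n) ℂ) *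
      diagonal ((↑) ∘ (√·) ∘ h.1.eigenvalues) *
      (star h.1.eigenvectorUnitary : Matrix (Fin n) (Fin n) ℂ)
  else 0

/-- The matrix geometric mean `x # y = x^{1/2} (x^{-1/2} y x^{-1/2})^{1/2} x^{1/2}`. -/
noncomputable def geoMean {n : ℕ} (x y : Matrix (Fin n) (Fin n) ℂ) :
    Matrix (Fin n) (Fin n) ℂ :=
  msqrt x * msqrt ((msqrt x)⁻¹ * y * (msqrt x)⁻¹) * msqrt x

namespace Matrix.PosSemidef

/-- The square root used by `msqrt`, as a field of a PSD proof. -/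
noncomputable def sqrt {n : ℕ} {A : Matrix (Fin n) (Fin n) ℂ} (h : A.PosSemidef) :
    Matrix (Fin n) (Fin n) ℂ :=
  (h.1.eigenvectorUnitary : Matrix (Fin n) (Fin n) ℂ) *
      diagonal ((↑) ∘ (√·) ∘ h.1.eigenvalues) *
      (star h.1.eigenvectorUnitary : Matrix (Fin n) (Fin n) ℂ)

open MatrixOrder in
lemma sqrt_eq_cfc {n : ℕ} {A : Matrix (Fin n) (Fin n) ℂ} (h : A.PosSemidef) :
    h.sqrt = CFC.sqrt A := by
  rw [CFC.sqrt_eq_cfc, cfc_nnreal_eq_real _ A (nonneg_iff_posSemidef.mpr h), h.1.cfc_eq]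
  simp only [IsHermitian.cfc, Unitary.conjStarAlgAut_apply]
  unfold sqrt
  congr 2
  congr 1
  funext i
  simp only [Function.comp_apply]
  exact congrArg Complex.ofReal (by rw [Real.coe_sqrt, Real.coe_toNNReal _ (h.eigenvalues_nonneg i),
    Algebra.algebraMap_self, RingHom.id_apply])

open MatrixOrder in
lemma posSemidef_sqrt {n : ℕ} {A : Matrix (Fin n) (Fin n) ℂ} (h : A.PosSemidef) :
    h.sqrt.PosSemidef := by
  rw [sqrt_eq_cfc]; exact nonneg_iff_posSemidef.mp (CFC.sqrt_nonneg A)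

open MatrixOrder in
lemma sqrt_mul_self {n : ℕ} {A : Matrix (Fin n) (Fin n) ℂ} (h : A.PosSemidef) :
    h.sqrt * h.sqrt = A := by
  rw [sqrt_eq_cfc]; exact CFC.sqrt_mul_sqrt_self A (nonneg_iff_posSemidef.mpr h)

open MatrixOrder in
lemma eq_sqrt_of_sq_eq {n : ℕ} {B : Matrix (Fin n) (Fin n) ℂ} (hB : B.PosSemidef)
    {A : Matrix (Fin n) (Fin n) ℂ} (hA : A.PosSemidef) (hBA : B ^ 2 = A) : B = hA.sqrt := by
  rw [sqrt_eq_cfc]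
  exact (CFC.sqrt_unique (by rw [← sq]; exact hBA) (nonneg_iff_posSemidef.mpr hB)).symm

end Matrix.PosSemidef

namespace GeoMeanAux

variable {n : ℕ}

lemma real_smul_eq (r : ℝ) (A : Matrix (Fin n) (Fin n) ℂ) : r • A = (r : ℂ) • A := by
  ext i j; simp [Matrix.smul_apply, Complex.real_smul]

lemma psd_smul {A : Matrix (Fin n) (Fin n) ℂ} (hA : A.PosSemidef) {r : ℝ} (hr : 0 ≤ r) :
    (r • A).PosSemidef := by
  rw [real_smul_eq]
  refine posSemidef_iff_dotProduct_mulVec.mpr ⟨?_, fun x => ?_⟩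
  · unfold Matrix.IsHermitian
    rw [conjTranspose_smul, hA.1.eq]
    congr 1
    simp [Complex.ext_iff]
  · rw [smul_mulVec, dotProduct_smul]
    exact mul_nonneg (by positivity) (hA.dotProduct_mulVec_nonneg x)

lemma pd_conj {A B : Matrix (Fin n) (Fin n) ℂ} (hA : A.PosDef) (hB : IsUnit B) :
    (Bᴴ * A * B).PosDef := by
  refine posDef_iff_dotProduct_mulVec.mpr ⟨Matrix.isHermitian_conjTranspose_mul_mul B hA.1, fun x hx => ?_⟩
  have hBx : B *ᵥ x ≠ 0 := by
    intro h
    apply hx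
    have := Matrix.mulVec_injective_iff_isUnit.mpr hB (a₁ := x) (a₂ := 0)
    simp only [Matrix.mulVec_zero] at this
    exact this h
  have := hA.dotProduct_mulVec_pos hBx
  rw [← Matrix.mulVec_mulVec, ← Matrix.mulVec_mulVec, dotProduct_mulVec,
    vecMul_conjTranspose, star_star]
  exact this

lemma psd_conj {A : Matrix (Fin n) (Fin n) ℂ} (B : Matrix (Fin n) (Fin n) ℂ)
    (hA : A.PosSemidef) : (Bᴴ * A * B).PosSemidef := hA.conjTranspose_mul_mul_same B

lemma sqrt_posDef {x : Matrix (Fin n) (Fin n) ℂ} (hx : x.PosDef) :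
    hx.posSemidef.sqrt.PosDef := by
  set s := hx.posSemidef.sqrt with hs
  have hsps_d : s.PosSemidef := hx.posSemidef.posSemidef_sqrt
  have hss : s * s = x := hx.posSemidef.sqrt_mul_self
  have hdet : IsUnit s := by
    have : IsUnit (s.det * s.det) := by
      rw [← Matrix.det_mul, hss]; exact hx.det_pos.ne'.isUnit
    exact (Matrix.isUnit_iff_isUnit_det s).mpr (isUnit_of_mul_isUnit_left this)
  refine posDef_iff_dotProduct_mulVec.mpr ⟨hsps_d.1, fun v hv => ?_⟩
  refine (hsps_d.dotProduct_mulVec_nonneg v).lt_of_ne' fun h0 => hv ?_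
  have hz : s *ᵥ v = 0 := (hsps_d.dotProduct_mulVec_zero_iff v).mp h0
  have := Matrix.mulVec_injective_iff_isUnit.mpr hdet (a₁ := v) (a₂ := 0)
  simp only [Matrix.mulVec_zero] at this
  exact this hz

lemma sqrt_mono {A B : Matrix (Fin n) (Fin n) ℂ} (hA : A.PosSemidef) (hB : B.PosSemidef)
    (hAB : (B - A).PosSemidef) : (hB.sqrt - hA.sqrt).PosSemidef := by
  set P := hA.sqrt with hPdef
  set Q := hB.sqrt with hQdef
  have hP : P.PosSemidef := hA.posSemidef_sqrt
  have hQ : Q.PosSemidef := hB.posSemidef_sqrt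
  have hPP : P * P = A := hA.sqrt_mul_self
  have hQQ : Q * Q = B := hB.sqrt_mul_self
  have hM : (Q - P).IsHermitian := hQ.1.sub hP.1
  apply hM.posSemidef_iff_eigenvalues_nonneg.mpr
  intro i
  by_contra hlt
  push_neg at hlt
  set t : ℝ := hM.eigenvalues i with htdef
  set u : Fin n → ℂ := ⇑(hM.eigenvectorBasis i) with hudef
  have hu0 : u ≠ 0 := by
    have := hM.eigenvectorBasis.orthonormal.ne_zero i
    intro h
    apply this
    ext j
    exact congrFun h j
  have hueig : (Q - P) *ᵥ u = (t : ℂ) • u := by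
    have h := hM.mulVec_eigenvectorBasis i
    ext j
    have hj := congrFun h j
    simpa [hudef, htdef, Complex.real_smul] using hj
  have hdecomp : B - A = Q * (Q - P) + (Q - P) * P := by
    rw [Matrix.mul_sub, Matrix.sub_mul, hPP, hQQ]
    abel
  have hq1 : star u ⬝ᵥ (Q * (Q - P)) *ᵥ u = (t : ℂ) * (star u ⬝ᵥ Q *ᵥ u) := by
    rw [← Matrix.mulVec_mulVec, hueig, Matrix.mulVec_smul, dotProduct_smul, smul_eq_mul]
  have hstar : star u ᵥ* (Q - P) = (t : ℂ) • star u := by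
    have h1 : star ((Q - P) *ᵥ u) = star u ᵥ* (Q - P) := by
      rw [Matrix.star_mulVec, hM.eq]
    rw [← h1, hueig, star_smul]
    simp
  have hq2 : star u ⬝ᵥ ((Q - P) * P) *ᵥ u = (t : ℂ) * (star u ⬝ᵥ P *ᵥ u) := by
    rw [← Matrix.mulVec_mulVec, dotProduct_mulVec, hstar, smul_dotProduct, smul_eq_mul]
  have hBA : (0 : ℂ) ≤ (t : ℂ) * (star u ⬝ᵥ Q *ᵥ u + star u ⬝ᵥ P *ᵥ u) := by
    have := hAB.dotProduct_mulVec_nonneg u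
    rwa [hdecomp, Matrix.add_mulVec, dotProduct_add, hq1, hq2, ← mul_add] at this
  have hqQ : (0 : ℂ) ≤ star u ⬝ᵥ Q *ᵥ u := hQ.dotProduct_mulVec_nonneg u
  have hqP : (0 : ℂ) ≤ star u ⬝ᵥ P *ᵥ u := hP.dotProduct_mulVec_nonneg u
  have hsum0 : star u ⬝ᵥ Q *ᵥ u + star u ⬝ᵥ P *ᵥ u = 0 := by
    have hle : (t : ℂ) * (star u ⬝ᵥ Q *ᵥ u + star u ⬝ᵥ P *ᵥ u) ≤ 0 := by
      apply mul_nonpos_of_nonpos_of_nonneg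
      · exact_mod_cast (Complex.real_le_real.mpr hlt.le : (t:ℂ) ≤ (0:ℝ))
      · exact add_nonneg hqQ hqP
    have ht0 : (t : ℂ) ≠ 0 := by exact_mod_cast hlt.ne
    have := le_antisymm hle hBA
    exact (mul_eq_zero.mp this).resolve_left ht0
  have hQ0 : Q *ᵥ u = 0 := by
    apply (hQ.dotProduct_mulVec_zero_iff u).mp
    exact ((add_eq_zero_iff_of_nonneg hqQ hqP).mp hsum0).1
  have hP0 : P *ᵥ u = 0 := by
    apply (hP.dotProduct_mulVec_zero_iff u).mp
    exact ((add_eq_zero_iff_of_nonneg hqQ hqP).mp hsum0).2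
  have : (t : ℂ) • u = 0 := by
    rw [← hueig, Matrix.sub_mulVec, hQ0, hP0, sub_zero]
  rcases smul_eq_zero.mp this with h | h
  · exact absurd (by exact_mod_cast h : t = 0) hlt.ne
  · exact hu0 h

lemma pd_conv {x₁ x₂ : Matrix (Fin n) (Fin n) ℂ} (hx₁ : x₁.PosDef) (hx₂ : x₂.PosDef)
    {l : ℝ} (hl0 : 0 ≤ l) (hl1 : l ≤ 1) : (l • x₁ + (1 - l) • x₂).PosDef := by
  rcases eq_or_lt_of_le hl0 with h | h
  · simp only [← h, sub_zero, zero_smul, one_smul, zero_add]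
    exact hx₂
  · have h1 : (l • x₁).PosDef := by
      rw [real_smul_eq]
      refine posDef_iff_dotProduct_mulVec.mpr ⟨?_, fun v hv => ?_⟩
      · unfold Matrix.IsHermitian
        rw [conjTranspose_smul, hx₁.1.eq]
        congr 1
        simp [Complex.ext_iff]
      · rw [smul_mulVec, dotProduct_smul, smul_eq_mul]
        have := hx₁.dotProduct_mulVec_pos hv
        positivity
    have h2 : ((1 - l) • x₂).PosSemidef := psd_smul hx₂.posSemidef (by linarith)
    exact posDef_iff_dotProduct_mulVec.mpr ⟨h1.1.add h2.1, fun v hv => by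
      rw [Matrix.add_mulVec, dotProduct_add]
      exact add_pos_of_pos_of_nonneg (h1.dotProduct_mulVec_pos hv) (h2.dotProduct_mulVec_nonneg v)⟩

lemma herm_conv {z₁ z₂ : Matrix (Fin n) (Fin n) ℂ} (h₁ : z₁.IsHermitian) (h₂ : z₂.IsHermitian)
    (l : ℝ) : (l • z₁ + (1 - l) • z₂).IsHermitian := by
  rw [real_smul_eq, real_smul_eq]
  unfold Matrix.IsHermitian
  rw [conjTranspose_add, conjTranspose_smul, conjTranspose_smul, h₁.eq, h₂.eq]
  congr 2 <;> simp [Complex.ext_iff]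

lemma conj_expand {x z zi xi : Matrix (Fin n) (Fin n) ℂ} (hxiH : xi.IsHermitian)
    (hziH : zi.IsHermitian) (hxH : x.IsHermitian) (hzH : z.IsHermitian) (hxiu : IsUnit xi.det) :
    (zi - xi * (x⁻¹ * z))ᴴ * xi⁻¹ * (zi - xi * (x⁻¹ * z)) =
      zi * xi⁻¹ * zi - zi * (x⁻¹ * z) - (z * x⁻¹) * zi + z * x⁻¹ * xi * (x⁻¹ * z) := by
  have h1 : xi⁻¹ * xi = 1 := Matrix.nonsing_inv_mul xi hxiu
  have h2 : xi * xi⁻¹ = 1 := Matrix.mul_nonsing_inv xi hxiu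
  have hq : (xi * (x⁻¹ * z))ᴴ = (z * x⁻¹) * xi := by
    simp [conjTranspose_mul, hxiH.eq, hziH.eq, hxH.inv.eq, hzH.eq, Matrix.mul_assoc]
  rw [conjTranspose_sub, hq, hziH.eq]
  rw [Matrix.sub_mul, Matrix.sub_mul, Matrix.mul_sub, Matrix.mul_sub]
  have e1 : zi * xi⁻¹ * (xi * (x⁻¹ * z)) = zi * (x⁻¹ * z) := by
    rw [Matrix.mul_assoc zi, ← Matrix.mul_assoc xi⁻¹, h1, Matrix.one_mul]
  have e2 : z * x⁻¹ * xi * xi⁻¹ * zi = z * x⁻¹ * zi := by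
    rw [Matrix.mul_assoc (z * x⁻¹), h2, Matrix.mul_one]
  have e3 : z * x⁻¹ * xi * xi⁻¹ * (xi * (x⁻¹ * z)) = z * x⁻¹ * xi * (x⁻¹ * z) := by
    rw [Matrix.mul_assoc (z * x⁻¹), h2, Matrix.mul_one, Matrix.mul_assoc (z*x⁻¹) xi]
  rw [e1, e2, e3]
  abel

lemma convex_aux {x₁ x₂ z₁ z₂ x z : Matrix (Fin n) (Fin n) ℂ} (hx₁ : x₁.PosDef)
    (hx₂ : x₂.PosDef) (hz₁ : z₁.IsHermitian) (hz₂ : z₂.IsHermitian) {l : ℝ}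
    (hl0 : 0 ≤ l) (hl1 : l ≤ 1)
    (hxdef : x = l • x₁ + (1 - l) • x₂) (hzdef : z = l • z₁ + (1 - l) • z₂)
    (hx : x.PosDef) (hzH : z.IsHermitian) :
    (l • (z₁ * x₁⁻¹ * z₁) + (1 - l) • (z₂ * x₂⁻¹ * z₂) - z * x⁻¹ * z).PosSemidef := by
  have hxu : IsUnit x.det := hx.det_pos.ne'.isUnit
  have hC₁ := conj_expand hx₁.1 hz₁ hx.1 hzH (hx₁.det_pos.ne'.isUnit)
  have hC₂ := conj_expand hx₂.1 hz₂ hx.1 hzH (hx₂.det_pos.ne'.isUnit)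
  have g1 : l • (z₁ * (x⁻¹ * z)) + (1 - l) • (z₂ * (x⁻¹ * z)) = z * x⁻¹ * z := by
    have h : (l • z₁ + (1 - l) • z₂) * (x⁻¹ * z)
        = l • (z₁ * (x⁻¹ * z)) + (1 - l) • (z₂ * (x⁻¹ * z)) := by
      rw [Matrix.add_mul, smul_mul_assoc, smul_mul_assoc]
    rw [← h, ← hzdef, ← Matrix.mul_assoc]
  have g2 : l • (z * x⁻¹ * z₁) + (1 - l) • (z * x⁻¹ * z₂) = z * x⁻¹ * z := by
    have h : z * x⁻¹ * (l • z₁ + (1 - l) • z₂)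
        = l • (z * x⁻¹ * z₁) + (1 - l) • (z * x⁻¹ * z₂) := by
      rw [Matrix.mul_add, mul_smul_comm, mul_smul_comm]
    rw [← h, ← hzdef]
  have g3 : l • (z * x⁻¹ * x₁ * (x⁻¹ * z)) + (1 - l) • (z * x⁻¹ * x₂ * (x⁻¹ * z))
      = z * x⁻¹ * z := by
    have : z * x⁻¹ * x * (x⁻¹ * z) = z * x⁻¹ * z := by
      rw [Matrix.mul_assoc (z * x⁻¹) x, ← Matrix.mul_assoc x x⁻¹ z,
        Matrix.mul_nonsing_inv x hxu, Matrix.one_mul]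
    have h : z * x⁻¹ * (l • x₁ + (1 - l) • x₂) * (x⁻¹ * z)
        = l • (z * x⁻¹ * x₁ * (x⁻¹ * z)) + (1 - l) • (z * x⁻¹ * x₂ * (x⁻¹ * z)) := by
      rw [Matrix.mul_add, Matrix.add_mul, mul_smul_comm, mul_smul_comm, smul_mul_assoc,
        smul_mul_assoc]
    rw [← this, ← h, ← hxdef]
  have key : l • ((z₁ - x₁ * (x⁻¹ * z))ᴴ * x₁⁻¹ * (z₁ - x₁ * (x⁻¹ * z)))
      + (1 - l) • ((z₂ - x₂ * (x⁻¹ * z))ᴴ * x₂⁻¹ * (z₂ - x₂ * (x⁻¹ * z)))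
      = l • (z₁ * x₁⁻¹ * z₁) + (1 - l) • (z₂ * x₂⁻¹ * z₂) - z * x⁻¹ * z := by
    rw [hC₁, hC₂]
    calc l • (z₁ * x₁⁻¹ * z₁ - z₁ * (x⁻¹ * z) - z * x⁻¹ * z₁ + z * x⁻¹ * x₁ * (x⁻¹ * z))
          + (1 - l) • (z₂ * x₂⁻¹ * z₂ - z₂ * (x⁻¹ * z) - z * x⁻¹ * z₂ + z * x⁻¹ * x₂ * (x⁻¹ * z))
        = (l • (z₁ * x₁⁻¹ * z₁) + (1 - l) • (z₂ * x₂⁻¹ * z₂))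
          - (l • (z₁ * (x⁻¹ * z)) + (1 - l) • (z₂ * (x⁻¹ * z)))
          - (l • (z * x⁻¹ * z₁) + (1 - l) • (z * x⁻¹ * z₂))
          + (l • (z * x⁻¹ * x₁ * (x⁻¹ * z)) + (1 - l) • (z * x⁻¹ * x₂ * (x⁻¹ * z))) := by
          module
      _ = l • (z₁ * x₁⁻¹ * z₁) + (1 - l) • (z₂ * x₂⁻¹ * z₂) - z * x⁻¹ * z := by
          rw [g1, g2, g3]; abel
  rw [← key]
  exact (psd_smul (psd_conj _ hx₁.inv.posSemidef) hl0).add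
    (psd_smul (psd_conj _ hx₂.inv.posSemidef) (by linarith))

lemma msqrt_eq {A : Matrix (Fin n) (Fin n) ℂ} (h : A.PosSemidef) : msqrt A = h.sqrt :=
  dif_pos h

lemma geoMean_facts {x y : Matrix (Fin n) (Fin n) ℂ} (hx : x.PosDef) (hy : y.PosDef) :
    (geoMean x y).PosSemidef ∧ geoMean x y * x⁻¹ * geoMean x y = y := by
  set s := hx.posSemidef.sqrt with hsdef
  have hsPD : s.PosDef := sqrt_posDef hx
  have hsH : s.IsHermitian := hsPD.1
  have hss : s * s = x := hx.posSemidef.sqrt_mul_self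
  have hsu : IsUnit s.det := hsPD.det_pos.ne'.isUnit
  have htH : (s⁻¹).IsHermitian := hsH.inv
  have hv : (s⁻¹ * y * s⁻¹).PosDef := by
    have h := pd_conj hy (Matrix.isUnit_nonsing_inv_iff.mpr hsPD.isUnit)
    rwa [htH.eq] at h
  have hrr : hv.posSemidef.sqrt * hv.posSemidef.sqrt = s⁻¹ * y * s⁻¹ :=
    hv.posSemidef.sqrt_mul_self
  have hg : geoMean x y = s * hv.posSemidef.sqrt * s := by
    unfold geoMean
    rw [msqrt_eq hx.posSemidef, ← hsdef, msqrt_eq hv.posSemidef]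
  constructor
  · rw [hg]
    have h := psd_conj s hv.posSemidef.posSemidef_sqrt
    rwa [hsH.eq] at h
  · have hxinv : x⁻¹ = s⁻¹ * s⁻¹ := by rw [← hss, Matrix.mul_inv_rev]
    rw [hg, hxinv]
    simp only [Matrix.mul_assoc]
    rw [Matrix.mul_nonsing_inv_cancel_left _ _ hsu, Matrix.nonsing_inv_mul_cancel_left _ _ hsu,
      ← Matrix.mul_assoc hv.posSemidef.sqrt hv.posSemidef.sqrt, hrr]
    simp only [Matrix.mul_assoc]
    rw [Matrix.nonsing_inv_mul _ hsu, Matrix.mul_one,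
      Matrix.mul_nonsing_inv_cancel_left _ _ hsu]

lemma step3 {x y z : Matrix (Fin n) (Fin n) ℂ} (hx : x.PosDef) (hy : y.PosDef)
    (hz : z.PosSemidef) (h1 : (y - z * x⁻¹ * z).PosSemidef) :
    (geoMean x y - z).PosSemidef := by
  set s := hx.posSemidef.sqrt with hsdef
  have hsPD : s.PosDef := sqrt_posDef hx
  have hsH : s.IsHermitian := hsPD.1
  have hss : s * s = x := hx.posSemidef.sqrt_mul_self
  have hsu : IsUnit s.det := hsPD.det_pos.ne'.isUnit
  have htH : (s⁻¹).IsHermitian := hsH.inv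
  have hv : (s⁻¹ * y * s⁻¹).PosDef := by
    have h := pd_conj hy (Matrix.isUnit_nonsing_inv_iff.mpr hsPD.isUnit)
    rwa [htH.eq] at h
  have hxinv : x⁻¹ = s⁻¹ * s⁻¹ := by rw [← hss, Matrix.mul_inv_rev]
  set w := s⁻¹ * z * s⁻¹ with hwdef
  have hw : w.PosSemidef := by
    have h := psd_conj s⁻¹ hz
    rwa [htH.eq] at h
  have hww : w * w = s⁻¹ * (z * x⁻¹ * z) * s⁻¹ := by
    rw [hwdef, hxinv]
    simp only [Matrix.mul_assoc]
  have hwwps : (w * w).PosSemidef := by rw [← pow_two]; exact hw.pow 2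
  have hvw : ((s⁻¹ * y * s⁻¹) - w * w).PosSemidef := by
    have h := psd_conj s⁻¹ h1
    rw [htH.eq, Matrix.mul_sub, Matrix.sub_mul] at h
    rwa [hww]
  have hwsq : w = hwwps.sqrt := hw.eq_sqrt_of_sq_eq hwwps (by rw [pow_two])
  have hmono := sqrt_mono hwwps hv.posSemidef hvw
  rw [← hwsq] at hmono
  have hg : geoMean x y = s * hv.posSemidef.sqrt * s := by
    unfold geoMean
    rw [msqrt_eq hx.posSemidef, ← hsdef, msqrt_eq hv.posSemidef]
  have hzback : s * w * s = z := by
    rw [hwdef]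
    simp only [Matrix.mul_assoc]
    rw [Matrix.nonsing_inv_mul _ hsu, Matrix.mul_one,
      Matrix.mul_nonsing_inv_cancel_left _ _ hsu]
  have final : geoMean x y - z = s * (hv.posSemidef.sqrt - w) * s := by
    rw [hg, ← hzback, ← Matrix.sub_mul, ← Matrix.mul_sub]
  rw [final]
  have h := psd_conj s hmono
  rwa [hsH.eq] at h

end GeoMeanAux

open GeoMeanAux

/-- Joint concavity of the geometric mean:
`λ(x₁ # y₁) + (1−λ)(x₂ # y₂) ≤ (λx₁ + (1−λ)x₂) # (λy₁ + (1−λ)y₂)` in the Loewner order. -/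
theorem geoMean_concave (n : ℕ) (x₁ x₂ y₁ y₂ : Matrix (Fin n) (Fin n) ℂ)
    (hx₁ : x₁.PosDef) (hx₂ : x₂.PosDef) (hy₁ : y₁.PosDef) (hy₂ : y₂.PosDef)
    (l : ℝ) (hl : l ∈ Set.Icc (0 : ℝ) 1) :
    ((geoMean (l • x₁ + (1 - l) • x₂) (l • y₁ + (1 - l) • y₂)) -
      (l • geoMean x₁ y₁ + (1 - l) • geoMean x₂ y₂)).PosSemidef := by
  obtain ⟨hl0, hl1⟩ := hl
  set x := l • x₁ + (1 - l) • x₂ with hxdef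
  set y := l • y₁ + (1 - l) • y₂ with hydef
  have hx : x.PosDef := pd_conv hx₁ hx₂ hl0 hl1
  have hy : y.PosDef := pd_conv hy₁ hy₂ hl0 hl1
  obtain ⟨hz₁psd, hy₁eq⟩ := geoMean_facts hx₁ hy₁
  obtain ⟨hz₂psd, hy₂eq⟩ := geoMean_facts hx₂ hy₂
  set z := l • geoMean x₁ y₁ + (1 - l) • geoMean x₂ y₂ with hzdef
  have hz : z.PosSemidef := (psd_smul hz₁psd hl0).add (psd_smul hz₂psd (by linarith))
  have hzH : z.IsHermitian := herm_conv hz₁psd.1 hz₂psd.1 l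
  have h1 : (y - z * x⁻¹ * z).PosSemidef := by
    have h := convex_aux hx₁ hx₂ hz₁psd.1 hz₂psd.1 hl0 hl1 hxdef hzdef hx hzH
    rwa [hy₁eq, hy₂eq, ← hydef] at h
  exact step3 hx hy hz h1
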